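/- Let φ: [r_0, ∞) → [0, ∞) be a monotone increasing differentiable function and δ > 0. Then the set { r ≥ max(r_0,1) : φ'(r) > max(φ(r), 1)^{1+δ} } has finite Lebesgue measure. -/

import Mathlib

open MeasureTheory

/-- If `g` is monotone on `Ici a` and differentiable at a point `x > a`, then `deriv g x ≥ 0`. -/
lemma aux_deriv_nonneg_of_monotoneOn {g : ℝ → ℝ} {a x : ℝ} (hx : a < x)
    (hm : MonotoneOn g (Set.Ici a)) (hd : DifferentiableAt ℝ g x) : 0 ≤ deriv g x := by
  have h := hd.hasDerivAt
  rw [hasDerivAt_iff_tendsto_slope] at h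
  have h' : Filter.Tendsto (slope g x) (nhdsWithin x (Set.Ioi x)) (nhds (deriv g x)) :=
    h.mono_left (nhdsWithin_mono x (fun y hy => ne_of_gt hy))
  refine ge_of_tendsto h' ?_
  have hmem : Set.Ioi x ∈ nhdsWithin x (Set.Ioi x) := self_mem_nhdsWithin
  filter_upwards [hmem] with y hy
  have hya : a ≤ y := le_of_lt (lt_trans hx hy)
  have hxa : a ≤ x := le_of_lt hx
  have : g x ≤ g y := hm hxa hya (le_of_lt hy)
  rw [slope_def_field]
  have hxy : (0:ℝ) < y - x := sub_pos.mpr hy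
  exact div_nonneg (by linarith) (le_of_lt hxy)

/-- E. Borel's growth lemma: for a monotone increasing differentiable function `φ` and
`δ > 0`, the set where `φ'(r) > max(φ(r),1)^{1+δ}` has finite Lebesgue measure. -/
theorem borel_growth_lemma (r₀ : ℝ) (φ : ℝ → ℝ) (δ : ℝ) (hδ : 0 < δ)
    (hmono : MonotoneOn φ (Set.Ici r₀))
    (hnonneg : ∀ r, r₀ ≤ r → 0 ≤ φ r)
    (hdiff : ∀ r, r₀ ≤ r → DifferentiableAt ℝ φ r) :
    volume {r : ℝ | max r₀ 1 ≤ r ∧ (max (φ r) 1) ^ ((1 : ℝ) + δ) < deriv φ r} < ⊤ := by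
  set c : ℝ := -(1 + δ) with hc
  set f : ℝ → ℝ := fun s => (max s 1) ^ c with hf
  -- basic facts about the integrand f
  have hmaxpos : ∀ s : ℝ, (0:ℝ) < max s 1 := fun s =>
    lt_of_lt_of_le one_pos (le_max_right s 1)
  have hfc : Continuous f := by
    apply (continuous_id.max continuous_const).rpow_const
    intro x
    exact Or.inl (ne_of_gt (hmaxpos x))
  have hf_nonneg : ∀ s, 0 ≤ f s := fun s => Real.rpow_nonneg (le_of_lt (hmaxpos s)) c
  have hf_le_one : ∀ s, f s ≤ 1 := fun s =>
    Real.rpow_le_one_of_one_le_of_nonpos (le_max_right s 1) (by simp [hc]; linarith)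
  set G : ℝ → ℝ := fun t => ∫ s in (0:ℝ)..t, f s with hGdef
  have hG : ∀ t, HasDerivAt G (f t) t := fun t =>
    (hfc.integral_hasStrictDerivAt 0 t).hasDerivAt
  have hGmono : Monotone G :=
    monotone_of_deriv_nonneg (fun t => (hG t).differentiableAt)
      (fun t => by rw [(hG t).deriv]; exact hf_nonneg t)
  have hGnonneg : ∀ t, 0 ≤ t → 0 ≤ G t := fun t ht =>
    intervalIntegral.integral_nonneg ht (fun s _ => hf_nonneg s)
  -- bound on G
  have hG1 : G 1 ≤ 1 := by
    have : G 1 ≤ ∫ _ in (0:ℝ)..1, (1:ℝ) := by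
      apply intervalIntegral.integral_mono_on (by norm_num)
        (hfc.intervalIntegrable 0 1) intervalIntegrable_const
      intro x _; exact hf_le_one x
    simpa using this
  have hGbound : ∀ t, G t ≤ 1 + 1 / δ := by
    intro t
    rcases le_or_gt t 1 with h | h
    · calc G t ≤ G 1 := hGmono h
        _ ≤ 1 := hG1
        _ ≤ 1 + 1 / δ := by have := one_div_pos.mpr hδ; linarith
    · have h1t : (1:ℝ) ≤ t := le_of_lt h
      have hsplit : G 1 + ∫ s in (1:ℝ)..t, f s = G t :=
        intervalIntegral.integral_add_adjacent_intervals
          (hfc.intervalIntegrable 0 1) (hfc.intervalIntegrable 1 t)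
      have hcongr : (∫ s in (1:ℝ)..t, f s) = ∫ s in (1:ℝ)..t, s ^ c := by
        apply intervalIntegral.integral_congr
        intro s hs
        rw [Set.uIcc_of_le h1t] at hs
        have : max s 1 = s := max_eq_left hs.1
        simp [hf, this]
      have hzero : (0:ℝ) ∉ Set.uIcc (1:ℝ) t := by
        rw [Set.uIcc_of_le h1t]
        intro h0
        linarith [h0.1]
      have hcne : c ≠ -1 := by
        simp only [hc]
        intro habs
        have : δ = 0 := by linarith [neg_injective habs]
        linarith
      have hval : (∫ s in (1:ℝ)..t, s ^ c) = (t ^ (c + 1) - 1 ^ (c + 1)) / (c + 1) :=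
        integral_rpow (Or.inr ⟨hcne, hzero⟩)
      have hc1 : c + 1 = -δ := by rw [hc]; ring
      have htpos : (0:ℝ) < t := lt_trans one_pos h
      have hbound2 : (∫ s in (1:ℝ)..t, s ^ c) ≤ 1 / δ := by
        rw [hval, hc1, Real.one_rpow]
        have h1 : (0:ℝ) ≤ t ^ (-δ) := Real.rpow_nonneg (le_of_lt htpos) _
        rw [div_neg, ← neg_div, neg_sub]
        gcongr
        linarith
      calc G t = G 1 + ∫ s in (1:ℝ)..t, f s := hsplit.symm
        _ ≤ 1 + 1 / δ := by rw [hcongr]; linarith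
  -- the composed function g = G ∘ φ
  set g : ℝ → ℝ := fun r => G (φ r) with hgdef
  have hgd : ∀ r, r₀ ≤ r → HasDerivAt g ((max (φ r) 1) ^ c * deriv φ r) r := by
    intro r hr
    exact (hG (φ r)).comp r (hdiff r hr).hasDerivAt
  have hgmono : MonotoneOn g (Set.Ici r₀) := hGmono.comp_monotoneOn hmono
  set r₁ : ℝ := max r₀ 1 with hr₁
  have hr₀r₁ : r₀ ≤ r₁ := le_max_left r₀ 1
  set F : Set ℝ := {r | 1 < deriv g r} with hFdef
  have hFmeas : MeasurableSet F :=
    measurableSet_lt measurable_const (measurable_deriv g)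
  -- the target set is contained in Ici r₁ ∩ F
  have hsub : {r : ℝ | max r₀ 1 ≤ r ∧ (max (φ r) 1) ^ ((1 : ℝ) + δ) < deriv φ r}
      ⊆ Set.Ici r₁ ∩ F := by
    rintro r ⟨hr1, hr2⟩
    refine ⟨hr1, ?_⟩
    have hr0 : r₀ ≤ r := le_trans hr₀r₁ hr1
    have hψpos : (0:ℝ) < max (φ r) 1 := hmaxpos (φ r)
    have hderiv_eq : deriv g r = (max (φ r) 1) ^ c * deriv φ r := (hgd r hr0).deriv
    have hcpos : (0:ℝ) < (max (φ r) 1) ^ c := Real.rpow_pos_of_pos hψpos c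
    have key : (max (φ r) 1) ^ c * (max (φ r) 1) ^ ((1:ℝ) + δ) = 1 := by
      rw [← Real.rpow_add hψpos, show c + (1 + δ) = 0 from by rw [hc]; ring,
        Real.rpow_zero]
    have : (max (φ r) 1) ^ c * (max (φ r) 1) ^ ((1:ℝ) + δ)
        < (max (φ r) 1) ^ c * deriv φ r := by
      exact mul_lt_mul_of_pos_left hr2 hcpos
    rw [key] at this
    simpa [hFdef, hderiv_eq] using this
  -- key measure bound on finite intervals
  have hkey : ∀ b : ℝ, r₁ ≤ b →
      volume (Set.Ioc r₁ b ∩ F) ≤ ENNReal.ofReal (1 + 1 / δ) := by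
    intro b hb
    set S : Set ℝ := Set.Ioc r₁ b ∩ F with hS
    have hSmeas : MeasurableSet S := measurableSet_Ioc.inter hFmeas
    have hSsub : S ⊆ Set.Ioc r₁ b := Set.inter_subset_left
    have hSfin : volume S ≠ ⊤ :=
      ne_top_of_le_ne_top (by simp) (measure_mono hSsub)
    -- integrability of deriv g on Ioc r₁ b
    have hgc : ContinuousOn g (Set.Icc r₁ b) := by
      intro x hx
      exact ((hgd x (le_trans hr₀r₁ hx.1)).differentiableAt.continuousAt).continuousWithinAt
    have hd' : ∀ x ∈ Set.Ioo r₁ b, HasDerivAt g (deriv g x) x := by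
      intro x hx
      exact ((hgd x (le_trans hr₀r₁ (le_of_lt hx.1))).differentiableAt).hasDerivAt
    have hnn : ∀ x ∈ Set.Ioo r₁ b, 0 ≤ deriv g x := by
      intro x hx
      exact aux_deriv_nonneg_of_monotoneOn (lt_of_le_of_lt hr₀r₁ hx.1) hgmono
        (hgd x (le_trans hr₀r₁ (le_of_lt hx.1))).differentiableAt
    have hint : IntegrableOn (deriv g) (Set.Ioc r₁ b) volume :=
      intervalIntegral.integrableOn_deriv_of_nonneg hgc hd' hnn
    -- FTC
    have hintint : IntervalIntegrable (deriv g) volume r₁ b :=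
      (intervalIntegrable_iff_integrableOn_Ioc_of_le hb).2 hint
    have hftc : (∫ x in r₁..b, deriv g x) = g b - g r₁ := by
      apply intervalIntegral.integral_eq_sub_of_hasDerivAt _ hintint
      intro x hx
      rw [Set.uIcc_of_le hb] at hx
      exact ((hgd x (le_trans hr₀r₁ hx.1)).differentiableAt).hasDerivAt
    -- chain of inequalities
    have h1 : (volume S).toReal = ∫ _ in S, (1:ℝ) := by
      rw [setIntegral_const]; simp [Measure.real]
    have h2 : (∫ _ in S, (1:ℝ)) ≤ ∫ x in S, deriv g x := by
      apply setIntegral_mono_on (integrableOn_const hSfin (by simp))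
        (hint.mono_set hSsub) hSmeas
      intro x hx
      exact le_of_lt hx.2
    have h3 : (∫ x in S, deriv g x) ≤ ∫ x in Set.Ioc r₁ b, deriv g x := by
      apply setIntegral_mono_set hint
      · refine (ae_restrict_iff' measurableSet_Ioc).2 (Filter.Eventually.of_forall ?_)
        intro x hx
        exact aux_deriv_nonneg_of_monotoneOn (lt_of_le_of_lt hr₀r₁ hx.1) hgmono
          (hgd x (le_trans hr₀r₁ (le_of_lt hx.1))).differentiableAt
      · exact Filter.Eventually.of_forall hSsub
    have h4 : (∫ x in Set.Ioc r₁ b, deriv g x) = g b - g r₁ := by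
      rw [← hftc, intervalIntegral.integral_of_le hb]
    have h5 : g b - g r₁ ≤ 1 + 1 / δ := by
      have hgb : g b ≤ 1 + 1 / δ := hGbound (φ b)
      have hgr : 0 ≤ g r₁ := hGnonneg (φ r₁) (hnonneg r₁ hr₀r₁)
      linarith
    have htoReal : (volume S).toReal ≤ 1 + 1 / δ := by
      rw [h1]; linarith
    rw [← ENNReal.ofReal_toReal hSfin]
    exact ENNReal.ofReal_le_ofReal htoReal
  -- assemble: the half-line intersection has bounded measure
  have hIoi : volume (Set.Ioi r₁ ∩ F) ≤ ENNReal.ofReal (1 + 1 / δ) := by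
    have hunion : Set.Ioi r₁ ∩ F = ⋃ n : ℕ, (Set.Ioc r₁ (r₁ + n) ∩ F) := by
      ext x
      simp only [Set.mem_inter_iff, Set.mem_Ioi, Set.mem_Ioc, Set.mem_iUnion]
      constructor
      · rintro ⟨hx, hxF⟩
        obtain ⟨n, hn⟩ := exists_nat_ge (x - r₁)
        exact ⟨n, ⟨hx, by linarith⟩, hxF⟩
      · rintro ⟨n, ⟨hx, _⟩, hxF⟩
        exact ⟨hx, hxF⟩
    have hdir : Directed (· ⊆ ·) (fun n : ℕ => Set.Ioc r₁ (r₁ + n) ∩ F) := by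
      intro m n
      refine ⟨max m n, ?_, ?_⟩
      · apply Set.inter_subset_inter_left
        apply Set.Ioc_subset_Ioc_right
        have : (m:ℝ) ≤ (max m n : ℕ) := Nat.cast_le.2 (le_max_left m n)
        linarith
      · apply Set.inter_subset_inter_left
        apply Set.Ioc_subset_Ioc_right
        have : (n:ℝ) ≤ (max m n : ℕ) := Nat.cast_le.2 (le_max_right m n)
        linarith
    rw [hunion, hdir.measure_iUnion]
    apply iSup_le
    intro n
    exact hkey (r₁ + n) (le_add_of_nonneg_right (Nat.cast_nonneg n))
  -- finish
  have hfinal : volume {r : ℝ | max r₀ 1 ≤ r ∧ (max (φ r) 1) ^ ((1 : ℝ) + δ) < deriv φ r}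
      ≤ ENNReal.ofReal (1 + 1 / δ) := by
    have hsub2 : Set.Ici r₁ ∩ F ⊆ {r₁} ∪ (Set.Ioi r₁ ∩ F) := by
      rintro x ⟨hx, hxF⟩
      rcases eq_or_lt_of_le (Set.mem_Ici.mp hx) with h | h
      · exact Or.inl (by simp [← h])
      · exact Or.inr ⟨h, hxF⟩
    calc volume {r : ℝ | max r₀ 1 ≤ r ∧ (max (φ r) 1) ^ ((1 : ℝ) + δ) < deriv φ r}
        ≤ volume (Set.Ici r₁ ∩ F) := measure_mono hsub
      _ ≤ volume ({r₁} ∪ (Set.Ioi r₁ ∩ F)) := measure_mono hsub2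
      _ ≤ volume {r₁} + volume (Set.Ioi r₁ ∩ F) := measure_union_le _ _
      _ = volume (Set.Ioi r₁ ∩ F) := by simp
      _ ≤ ENNReal.ofReal (1 + 1 / δ) := hIoi
  exact lt_of_le_of_lt hfinal ENNReal.ofReal_lt_top
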